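/- Let (S, 𝒮, μ) = ⨂_{i,j=0}^∞ (S_{i,j}, 𝒮_{i,j}, μ_{i,j}) be a doubly indexed product probability space and let F_{i,j} be the σ-field generated by the projection s ↦ (s_{i',j'} : i' ≤ i, j' ≤ j). Then (F_{i,j}) satisfies the (F4) condition, i.e. F_{i,j+1} and F_{i+1,j} are conditionally independent given F_{i,j}. -/

import Mathlib

open MeasureTheory ProbabilityTheory

section Aux

variable {Ω : Type*}

/-- If `f` is `mA`-measurable and integrable, `u ∈ mC ⊆ mA`, `v ∈ mD`, and `mA ⊥ mD`, then
`∫_{u ∩ v} f = μ(v) ∫_u f`. -/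
lemma setIntegral_inter_indep {mA mC mD m0 : MeasurableSpace Ω} {μ : Measure Ω}
    [IsProbabilityMeasure μ] (hCA : mC ≤ mA) (hA : mA ≤ m0)
    (hD : mD ≤ m0) (hindep : Indep mA mD μ) {f : Ω → ℝ}
    (hf : Measurable[mA] f) (hfi : Integrable f μ)
    {u v : Set Ω} (hu : MeasurableSet[mC] u) (hv : MeasurableSet[mD] v) :
    ∫ x in u ∩ v, f x ∂μ = (μ v).toReal * ∫ x in u, f x ∂μ := by
  have huA : MeasurableSet[mA] u := hCA u hu
  set X : Ω → ℝ := u.indicator f with hX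
  set Y : Ω → ℝ := v.indicator (fun _ => (1 : ℝ)) with hY
  have hXmeas : Measurable[mA] X := hf.indicator huA
  have hYmeas : Measurable[mD] Y := measurable_const.indicator hv
  have hXY : IndepFun X Y μ :=
    indep_of_indep_of_le_right (indep_of_indep_of_le_left hindep hXmeas.comap_le)
      hYmeas.comap_le
  have hmul : ∀ x, (u ∩ v).indicator f x = X x * Y x := by
    intro x
    by_cases hxu : x ∈ u <;> by_cases hxv : x ∈ v <;>
      simp [hX, hY, Set.indicator_apply, hxu, hxv]
  have h1 : ∫ x in u ∩ v, f x ∂μ = ∫ x, X x * Y x ∂μ := by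
    rw [← integral_indicator ((hA _ huA).inter (hD _ hv))]
    exact integral_congr_ae (Filter.Eventually.of_forall hmul)
  have h2 : ∫ x, X x * Y x ∂μ = (∫ x, X x ∂μ) * ∫ x, Y x ∂μ :=
    hXY.integral_mul_eq_mul_integral ((hXmeas.mono hA le_rfl).aestronglyMeasurable)
      ((hYmeas.mono hD le_rfl).aestronglyMeasurable)
  have h3 : ∫ x, X x ∂μ = ∫ x in u, f x ∂μ := integral_indicator (hA _ huA)
  have h4 : ∫ x, Y x ∂μ = (μ v).toReal := by
    rw [hY, integral_indicator (hD _ hv)]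
    simp
    rfl
  rw [h1, h2, h3, h4, mul_comm]

/-- Key lemma: if `mC ≤ mA`, `mA` and `mD` are independent, and `g` is bounded and
`mA`-measurable, then `μ[g | mC ⊔ mD] = μ[g | mC]` a.e. -/
lemma condexp_sup_indep {mA mC mD m0 : MeasurableSpace Ω} {μ : Measure Ω}
    [IsProbabilityMeasure μ] (hCA : mC ≤ mA) (hA : mA ≤ m0)
    (hD : mD ≤ m0) (hindep : Indep mA mD μ) {g : Ω → ℝ} {C : ℝ} (hgb : ∀ x, |g x| ≤ C)
    (hg : Measurable[mA] g) :
    μ[g | mC ⊔ mD] =ᵐ[μ] μ[g | mC] := by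
  have hC : mC ≤ m0 := hCA.trans hA
  have hB : mC ⊔ mD ≤ m0 := sup_le hC hD
  have hgi : Integrable g μ :=
    (integrable_const C).mono' (hg.mono hA le_rfl).aestronglyMeasurable
      (Filter.Eventually.of_forall fun x => by simpa using hgb x)
  -- the π-system generating `mC ⊔ mD`
  set π : Set (Set Ω) := {s | ∃ u v, MeasurableSet[mC] u ∧ MeasurableSet[mD] v ∧ s = u ∩ v}
    with hπ
  have h_eq : mC ⊔ mD = MeasurableSpace.generateFrom π := by
    refine le_antisymm (sup_le ?_ ?_) (MeasurableSpace.generateFrom_le ?_)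
    · intro s hs
      exact MeasurableSpace.measurableSet_generateFrom
        ⟨s, Set.univ, hs, MeasurableSet.univ, (Set.inter_univ s).symm⟩
    · intro s hs
      exact MeasurableSpace.measurableSet_generateFrom
        ⟨Set.univ, s, MeasurableSet.univ, hs, (Set.univ_inter s).symm⟩
    · rintro t ⟨u, v, hu, hv, rfl⟩
      exact ((le_sup_left : mC ≤ mC ⊔ mD) u hu).inter ((le_sup_right : mD ≤ mC ⊔ mD) v hv)
  have h_pi : IsPiSystem π := by
    rintro s ⟨u1, v1, hu1, hv1, rfl⟩ t ⟨u2, v2, hu2, hv2, rfl⟩ -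
    refine ⟨u1 ∩ u2, v1 ∩ v2, hu1.inter hu2, hv1.inter hv2, ?_⟩
    ext x; constructor <;> (intro hx; simp only [Set.mem_inter_iff] at hx ⊢; tauto)
  -- the condexp wrt `mC` is measurable wrt `mA`
  have hcm : Measurable[mA] (μ[g | mC]) :=
    (stronglyMeasurable_condExp.measurable).mono hCA le_rfl
  have hci : Integrable (μ[g | mC]) μ := integrable_condExp
  -- set-integral equality on the π-system extends to `mC ⊔ mD`
  have key : ∀ s : Set Ω, MeasurableSet[mC ⊔ mD] s →
      ∫ x in s, (μ[g | mC]) x ∂μ = ∫ x in s, g x ∂μ := by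
    have := @MeasurableSpace.induction_on_inter Ω (mC ⊔ mD)
      (fun s _ => ∫ x in s, (μ[g | mC]) x ∂μ = ∫ x in s, g x ∂μ) π h_eq h_pi
    refine fun s hs => this ?_ ?_ ?_ ?_ s hs
    · simp
    · rintro t ⟨u, v, hu, hv, rfl⟩
      rw [setIntegral_inter_indep hCA hA hD hindep hcm hci hu hv,
        setIntegral_inter_indep hCA hA hD hindep hg hgi hu hv,
        setIntegral_condExp hC hgi hu]
    · intro t ht h
      have h1 := integral_add_compl (hB t ht) hci
      have h2 := integral_add_compl (hB t ht) hgi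
      have h3 : ∫ x, (μ[g | mC]) x ∂μ = ∫ x, g x ∂μ := integral_condExp hC
      linarith
    · intro f hdisj hfm hfP
      rw [integral_iUnion (fun i => hB _ (hfm i)) hdisj hci.integrableOn,
        integral_iUnion (fun i => hB _ (hfm i)) hdisj hgi.integrableOn]
      exact tsum_congr hfP
  refine (ae_eq_condExp_of_forall_setIntegral_eq hB hgi
    (fun s _ _ => hci.integrableOn) (fun s hs _ => key s hs) ?_).symm
  exact (stronglyMeasurable_condExp.mono (le_sup_left : mC ≤ mC ⊔ mD)).aestronglyMeasurable

end Aux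

/-- A doubly indexed product probability space with the filtration generated by the
projections `s ↦ (s_{i',j'} : i' ≤ i, j' ≤ j)` satisfies the (F4) condition:
`F_{i,j+1}` and `F_{i+1,j}` are conditionally independent given `F_{i,j}`. -/
theorem double_product_filtration_F4
    (S : ℕ × ℕ → Type) [∀ p, MeasurableSpace (S p)]
    (μi : (p : ℕ × ℕ) → Measure (S p)) [∀ p, IsProbabilityMeasure (μi p)]
    (μ : Measure ((p : ℕ × ℕ) → S p)) [IsProbabilityMeasure μ]
    -- `μ` is the product measure: characterization on finite cylinders
    (hμ : ∀ (s : Finset (ℕ × ℕ)) (t : (p : ℕ × ℕ) → Set (S p)),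
      (∀ p ∈ s, MeasurableSet (t p)) →
      μ {x | ∀ p ∈ s, x p ∈ t p} = ∏ p ∈ s, μi p (t p))
    -- the canonical biparameter filtration
    (F : ℕ → ℕ → MeasurableSpace ((p : ℕ × ℕ) → S p))
    (hF : ∀ i j, F i j = MeasurableSpace.comap
      (fun x => fun q : {q : ℕ × ℕ // q.1 ≤ i ∧ q.2 ≤ j} => x q.1) inferInstance) :
    -- (F4): `F (i, j+1)` and `F (i+1, j)` are conditionally independent given `F (i, j)`
    ∀ i j, ∀ g h : ((p : ℕ × ℕ) → S p) → ℝ,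
      (∃ C : ℝ, ∀ x, |g x| ≤ C) → (∃ C : ℝ, ∀ x, |h x| ≤ C) →
      Measurable[F i (j + 1)] g → Measurable[F (i + 1) j] h →
      μ[ (fun x => g x * h x) | F i j] =ᵐ[μ]
        fun x => (μ[g | F i j]) x * (μ[h | F i j]) x := by
  intro i j g h hgb hhb hg hh
  obtain ⟨Cg, hCg⟩ := hgb
  obtain ⟨Ch, hCh⟩ := hhb
  -- the coordinate σ-algebras
  set K : Set (ℕ × ℕ) → MeasurableSpace ((p : ℕ × ℕ) → S p) :=
    fun I => ⨆ p ∈ I, MeasurableSpace.comap (fun x => x p) inferInstance with hK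
  have hK_le : ∀ I, K I ≤ MeasurableSpace.pi := by
    intro I
    exact iSup₂_le fun p _ => (measurable_pi_apply p).comap_le
  have hK_mono : ∀ {I J : Set (ℕ × ℕ)}, I ⊆ J → K I ≤ K J := by
    intro I J hIJ
    exact biSup_mono hIJ
  -- `F i j = K (rectangle i j)`
  have hFK : ∀ i' j' : ℕ, F i' j' = K {p : ℕ × ℕ | p.1 ≤ i' ∧ p.2 ≤ j'} := by
    intro i' j'
    rw [hF i' j']
    apply le_antisymm
    · have hpi : (inferInstance :
          MeasurableSpace ((q : {q : ℕ × ℕ // q.1 ≤ i' ∧ q.2 ≤ j'}) → S q.1))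
          = ⨆ q, MeasurableSpace.comap (fun y => y q) inferInstance := rfl
      rw [hpi, MeasurableSpace.comap_iSup]
      refine iSup_le fun q => ?_
      rw [MeasurableSpace.comap_comp]
      exact le_biSup (fun p => MeasurableSpace.comap
        (fun x : (p : ℕ × ℕ) → S p => x p) inferInstance)
        (show q.1 ∈ {p : ℕ × ℕ | p.1 ≤ i' ∧ p.2 ≤ j'} from q.2)
    · refine iSup₂_le fun p hp => ?_
      have h1 : MeasurableSpace.comap (fun x : (p : ℕ × ℕ) → S p => x p)
            inferInstance
          = MeasurableSpace.comap
              (fun x => fun q : {q : ℕ × ℕ // q.1 ≤ i' ∧ q.2 ≤ j'} => x q.1)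
              (MeasurableSpace.comap (fun y => y (⟨p, hp⟩ : {q : ℕ × ℕ // q.1 ≤ i' ∧ q.2 ≤ j'}))
                inferInstance) := by
        rw [MeasurableSpace.comap_comp]
        rfl
      rw [h1]
      exact MeasurableSpace.comap_mono
        ((measurable_pi_apply (⟨p, hp⟩ : {q : ℕ × ℕ // q.1 ≤ i' ∧ q.2 ≤ j'})).comap_le)
  -- independence of coordinates
  have hiIndepFun : iIndepFun (fun (p : ℕ × ℕ) (x : (q : ℕ × ℕ) → S q) => x p) μ := by
    rw [iIndepFun_iff_measure_inter_preimage_eq_mul]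
    intro s sets h_meas
    have hsingle : ∀ p ∈ s,
        μ ((fun x : (p : ℕ × ℕ) → S p => x p) ⁻¹' sets p) = μi p (sets p) := by
      intro p hp
      have h1 := hμ {p} sets (by
        intro q hq
        rw [Finset.mem_singleton] at hq
        rw [hq]
        exact h_meas p hp)
      have h2 : {x : (p : ℕ × ℕ) → S p | ∀ q ∈ ({p} : Finset (ℕ × ℕ)), x q ∈ sets q}
          = (fun x : (p : ℕ × ℕ) → S p => x p) ⁻¹' sets p := by
        ext x; simp
      rw [h2] at h1
      rw [h1]
      simp
    have hset : (⋂ p ∈ s, (fun x : (p : ℕ × ℕ) → S p => x p) ⁻¹' sets p)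
        = {x | ∀ p ∈ s, x p ∈ sets p} := by
      ext x; simp
    rw [hset, hμ s sets h_meas]
    exact Finset.prod_congr rfl fun p hp => (hsingle p hp).symm
  have hiIndep : iIndep
      (fun p : ℕ × ℕ => MeasurableSpace.comap (fun x => x p) inferInstance) μ := hiIndepFun
  have hind : ∀ I J : Set (ℕ × ℕ), Disjoint I J → Indep (K I) (K J) μ := by
    intro I J hIJ
    exact indep_iSup_of_disjoint (fun p => (measurable_pi_apply p).comap_le) hiIndep hIJ
  have hm := hFK i j
  have hm1 := hFK i (j + 1)
  have hm2 := hFK (i + 1) j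
  -- notation for the three rectangles
  set A : Set (ℕ × ℕ) := {p | p.1 ≤ i ∧ p.2 ≤ j + 1} with hA
  set B : Set (ℕ × ℕ) := {p | p.1 ≤ i + 1 ∧ p.2 ≤ j} with hB
  set Cs : Set (ℕ × ℕ) := {p | p.1 ≤ i ∧ p.2 ≤ j} with hCs
  set D : Set (ℕ × ℕ) := {p | p.1 = i + 1 ∧ p.2 ≤ j} with hD
  have hBCD : B = Cs ∪ D := by
    ext p
    simp only [hB, hCs, hD, Set.mem_setOf_eq, Set.mem_union]
    constructor
    · rintro ⟨h1, h2⟩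
      rcases Nat.lt_or_ge p.1 (i + 1) with h' | h'
      · exact Or.inl ⟨Nat.lt_succ_iff.mp h', h2⟩
      · exact Or.inr ⟨le_antisymm h1 h', h2⟩
    · rintro (⟨h1, h2⟩ | ⟨h1, h2⟩)
      · exact ⟨h1.trans (Nat.le_succ i), h2⟩
      · exact ⟨h1.le, h2⟩
  have hAD : Disjoint A D := by
    rw [Set.disjoint_left]
    rintro p ⟨h1, _⟩ ⟨h2, _⟩
    omega
  have hm_le : F i j ≤ MeasurableSpace.pi := by rw [hm]; exact hK_le _
  have hm1_le : F i (j + 1) ≤ MeasurableSpace.pi := by rw [hm1]; exact hK_le _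
  have hm2_le : F (i + 1) j ≤ MeasurableSpace.pi := by rw [hm2]; exact hK_le _
  have hmm1 : F i j ≤ F i (j + 1) := by
    rw [hm, hm1]
    exact hK_mono fun p hp => ⟨hp.1, hp.2.trans (Nat.le_succ j)⟩
  have hmm2 : F i j ≤ F (i + 1) j := by
    rw [hm, hm2]
    exact hK_mono fun p hp => ⟨hp.1.trans (Nat.le_succ i), hp.2⟩
  -- the key conditional expectation identity: `μ[g | F (i+1) j] = μ[g | F i j]`
  have hgeq : μ[g | F (i + 1) j] =ᵐ[μ] μ[g | F i j] := by
    have hsup : F (i + 1) j = F i j ⊔ K D := by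
      rw [hm2, hm, hBCD, hK]
      exact iSup_union
    rw [hsup, hm]
    refine condexp_sup_indep (hK_mono ?_) (hK_le A) (hK_le D) (hind A D hAD) hCg ?_
    · intro p hp; exact ⟨hp.1, hp.2.trans (Nat.le_succ j)⟩
    · rw [← hm1]; exact hg
  -- integrability facts
  have hg_asm : AEStronglyMeasurable g μ :=
    (hg.mono hm1_le le_rfl).aestronglyMeasurable
  have hh_asm : AEStronglyMeasurable h μ :=
    (hh.mono hm2_le le_rfl).aestronglyMeasurable
  have hgi : Integrable g μ :=
    (integrable_const Cg).mono' hg_asm (Filter.Eventually.of_forall fun x => by simpa using hCg x)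
  have hhi : Integrable h μ :=
    (integrable_const Ch).mono' hh_asm (Filter.Eventually.of_forall fun x => by simpa using hCh x)
  have hghi : Integrable (h * g) μ := by
    refine hgi.bdd_mul hh_asm (Filter.Eventually.of_forall fun x => by simpa using hCh x)
  -- main computation
  have step1 : μ[(fun x => g x * h x) | F i j]
      =ᵐ[μ] μ[ μ[(fun x => g x * h x) | F (i + 1) j] | F i j] :=
    (condExp_condExp_of_le hmm2 hm2_le).symm
  have step2 : μ[(fun x => g x * h x) | F (i + 1) j] =ᵐ[μ] h * μ[g | F (i + 1) j] := by
    have : (fun x => g x * h x) = h * g := by funext x; exact mul_comm _ _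
    rw [this]
    exact condExp_mul_of_stronglyMeasurable_left hh.stronglyMeasurable hghi hgi
  have step2' : μ[(fun x => g x * h x) | F (i + 1) j] =ᵐ[μ] (μ[g | F i j]) * h := by
    refine step2.trans ?_
    filter_upwards [hgeq] with x hx
    simp only [Pi.mul_apply, hx, mul_comm]
  have step3 : μ[ μ[(fun x => g x * h x) | F (i + 1) j] | F i j]
      =ᵐ[μ] μ[ (μ[g | F i j]) * h | F i j] := condExp_congr_ae step2'
  have step4 : μ[ (μ[g | F i j]) * h | F i j] =ᵐ[μ] (μ[g | F i j]) * μ[h | F i j] := by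
    have hint : Integrable ((μ[g | F i j]) * h) μ := by
      have h1 : Integrable (h * μ[g | F i j]) μ :=
        integrable_condExp.bdd_mul hh_asm (Filter.Eventually.of_forall fun x => by simpa using hCh x)
      exact h1.congr (Filter.Eventually.of_forall fun x => mul_comm _ _)
    exact condExp_mul_of_stronglyMeasurable_left stronglyMeasurable_condExp hint hhi
  exact ((step1.trans step3).trans step4)
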